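/- Let j ≥ 0. For n ≥ 0 let a_n denote the number of Deutsch paths of length n from height 0 to height j all of whose heights h_i satisfy h_i ≥ 0 (no upper bound). Then in the formal power series ring ℤ[[v]], the series S = Σ_{n≥0} a_n · vⁿ · ((1+v+v²)⁻¹)ⁿ satisfies S · (1+v)^{j+1} = (1+v+v²) · v^{j}. -/

import Mathlib

open PowerSeries Finset

/-- The power series `1 + v + v²` over `ℤ`. -/
noncomputable def q : PowerSeries ℤ := 1 + X + X ^ 2

/-- `v · (1+v+v²)⁻¹` as a formal power series over `ℤ`. -/
noncomputable def w : PowerSeries ℤ := X * PowerSeries.invOfUnit q 1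

/-- `p` is a Deutsch path of length `n`: each step is either an up-step `+1`
or a down-step of arbitrary (negative) size. -/
def IsDeutschPath (n : ℕ) (p : Fin (n + 1) → ℤ) : Prop :=
  ∀ i : Fin n, p i.succ - p i.castSucc = 1 ∨ p i.succ - p i.castSucc ≤ -1

/-- Number of Deutsch paths of length `n` from height `a` to height `b`
all of whose heights satisfy the predicate `P`. -/
noncomputable def pathCount (n : ℕ) (a b : ℤ) (P : ℤ → Prop) : ℕ :=
  Nat.card {p : Fin (n + 1) → ℤ //
    p 0 = a ∧ p (Fin.last n) = b ∧ (∀ i, P (p i)) ∧ IsDeutschPath n p}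

/-- The power series `Σ_{n≥0} a_n · vⁿ · ((1+v+v²)⁻¹)ⁿ`.  Since the `n`-th
summand has order `≥ n`, its coefficient of `v^N` is the (finite) sum of the
corresponding coefficients of the summands with `n ≤ N`. -/
noncomputable def series (a : ℕ → ℕ) : PowerSeries ℤ :=
  PowerSeries.mk fun N => ∑ n ∈ range (N + 1), (a n : ℤ) * coeff N (w ^ n)

/-! ### Combinatorial part -/

abbrev PathSet (n : ℕ) (b : ℤ) : Type :=
  {p : Fin (n + 1) → ℤ //
    p 0 = 0 ∧ p (Fin.last n) = b ∧ (∀ i, (fun x => 0 ≤ x) (p i)) ∧ IsDeutschPath n p}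

noncomputable def aZ (b : ℤ) (n : ℕ) : ℕ := Nat.card (PathSet n b)

lemma pathCount_eq (n : ℕ) (b : ℤ) :
    pathCount n 0 b (fun x => 0 ≤ x) = aZ b n := rfl

lemma step_le {n : ℕ} {p : Fin (n+1) → ℤ} (hp : IsDeutschPath n p) (i : Fin n) :
    p i.succ ≤ p i.castSucc + 1 := by
  rcases hp i with h | h <;> omega

lemma height_le {n : ℕ} {p : Fin (n+1) → ℤ} (h0 : p 0 = 0) (hp : IsDeutschPath n p) :
    ∀ i : Fin (n+1), p i ≤ (i : ℕ) := by
  intro i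
  induction i using Fin.induction with
  | zero => simp [h0]
  | succ k ih =>
      have h1 := step_le hp k
      simp only [Fin.coe_castSucc, Fin.val_succ] at *
      push_cast
      omega

instance pathSetFinite (n : ℕ) (b : ℤ) : Finite (PathSet n b) := by
  haveI : Finite (Set.Icc (0:ℤ) n) := (Set.finite_Icc (0:ℤ) n).to_subtype
  apply Finite.of_injective
    (f := fun (p : PathSet n b) (i : Fin (n+1)) =>
      (⟨p.1 i, p.2.2.2.1 i, le_trans (height_le p.2.1 p.2.2.2.2 i)
        (by exact_mod_cast Nat.le_of_lt_succ i.isLt)⟩ : Set.Icc (0:ℤ) n))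
  intro p q h
  exact Subtype.ext (funext fun i => congrArg Subtype.val (congrFun h i))

lemma aZ_eq_zero {b : ℤ} {n : ℕ} (h : b < 0 ∨ (n : ℤ) < b) : aZ b n = 0 := by
  have : IsEmpty (PathSet n b) := by
    constructor
    rintro ⟨p, h0, hl, hnn, hp⟩
    have h1 := hnn (Fin.last n)
    have h2 := height_le h0 hp (Fin.last n)
    rw [hl] at h1 h2
    simp only [Fin.val_last] at h2
    omega
  exact Nat.card_of_isEmpty

noncomputable def a (j n : ℕ) : ℕ := pathCount n 0 j (fun x => 0 ≤ x)

lemma a_eq (j n : ℕ) : a j n = aZ j n := rfl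

lemma a_eq_zero {j n : ℕ} (h : n < j) : a j n = 0 := by
  rw [a_eq]; exact aZ_eq_zero (Or.inr (by exact_mod_cast h))

lemma a_zero_eq (j : ℕ) : a j 0 = if j = 0 then 1 else 0 := by
  rcases eq_or_ne j 0 with rfl | hj
  · simp only [if_pos rfl]
    rw [a_eq, aZ]
    haveI : Unique (PathSet 0 (0:ℤ)) := by
      refine ⟨⟨⟨fun _ => 0, rfl, rfl, fun i => le_refl 0, fun i => i.elim0⟩⟩, ?_⟩
      rintro ⟨p, h0, hl, hnn, hp⟩
      apply Subtype.ext
      funext i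
      have hi : i = 0 := Fin.fin_one_eq_zero i
      show p i = 0
      rw [hi, h0]
    exact Nat.card_unique
  · rw [if_neg hj]
    exact a_eq_zero (Nat.pos_of_ne_zero hj)

/-! ### The last-step decomposition -/

noncomputable def V (j n : ℕ) : Finset ℤ :=
  (if j = 0 then ∅ else {(j:ℤ) - 1}) ∪ Finset.Icc ((j:ℤ)+1) (n:ℤ)

lemma mem_V_of (n j : ℕ) (p : PathSet (n+1) (j:ℤ)) :
    p.1 (Fin.castSucc (Fin.last n)) ∈ V j n := by
  obtain ⟨p, h0, hl, hnn, hp⟩ := p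
  have hstep := hp (Fin.last n)
  have hlast : (Fin.last n).succ = Fin.last (n+1) := rfl
  rw [hlast, hl] at hstep
  have hnn' := hnn (Fin.castSucc (Fin.last n))
  have hle := height_le h0 hp (Fin.castSucc (Fin.last n))
  simp only [Fin.coe_castSucc, Fin.val_last] at hle
  simp only [V, Finset.mem_union, Finset.mem_Icc]
  rcases hstep with h | h
  · left
    have hj : j ≠ 0 := by
      intro hj0
      rw [hj0] at h
      push_cast at h
      omega
    rw [if_neg hj]
    simp only [Finset.mem_singleton]
    omega
  · right
    omega

lemma step_ok {j n : ℕ} {h : ℤ} (hh : h ∈ V j n) :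
    (j:ℤ) - h = 1 ∨ (j:ℤ) - h ≤ -1 := by
  simp only [V, Finset.mem_union, Finset.mem_Icc] at hh
  rcases hh with hh | hh
  · rcases eq_or_ne j 0 with rfl | hj
    · simp at hh
    · rw [if_neg hj] at hh
      simp only [Finset.mem_singleton] at hh
      omega
  · omega

/-- Extending a path of length `n` ending at `h` by a final step to `j`. -/
noncomputable def fiberEquiv (n j : ℕ) (h : ℤ) (hh : h ∈ V j n) :
    {p : PathSet (n+1) (j:ℤ) // p.1 (Fin.castSucc (Fin.last n)) = h} ≃ PathSet n h where
  toFun := fun pp =>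
    ⟨Fin.init pp.1.1, by
      show pp.1.1 (Fin.castSucc 0) = 0
      rw [Fin.castSucc_zero]; exact pp.1.2.1,
     pp.2,
     fun i => pp.1.2.2.2.1 _,
     fun i => by
      have := pp.1.2.2.2.2 i.castSucc
      simp only [Fin.init]
      rwa [Fin.succ_castSucc] at this⟩
  invFun := fun p =>
    ⟨⟨Fin.snoc p.1 (j:ℤ), by
        have hz : ((0 : Fin (n+2))) = Fin.castSucc 0 := rfl
        rw [hz, Fin.snoc_castSucc]; exact p.2.1,
      by rw [Fin.snoc_last],
      by
        intro i
        induction i using Fin.lastCases with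
        | last => rw [Fin.snoc_last]; exact_mod_cast Int.ofNat_nonneg j
        | cast k => rw [Fin.snoc_castSucc]; exact p.2.2.2.1 k,
      by
        intro i
        induction i using Fin.lastCases with
        | last =>
            have h1 : (Fin.last n).succ = Fin.last (n+1) := rfl
            rw [h1, Fin.snoc_last, Fin.snoc_castSucc, p.2.2.1]
            exact step_ok hh
        | cast k =>
            rw [Fin.succ_castSucc, Fin.snoc_castSucc, Fin.snoc_castSucc]
            exact p.2.2.2.2 k⟩,
     by simp only [Fin.snoc_castSucc]; exact p.2.2.1⟩
  left_inv := fun pp => by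
    obtain ⟨⟨p, hp0, hpl, hpn, hpd⟩, hplast⟩ := pp
    apply Subtype.ext
    apply Subtype.ext
    show Fin.snoc (Fin.init p) (j:ℤ) = p
    rw [← hpl, Fin.snoc_init_self]
  right_inv := fun p => by
    apply Subtype.ext
    show Fin.init (Fin.snoc (α := fun _ => ℤ) p.1 (j:ℤ)) = p.1
    rw [Fin.init_snoc]

lemma card_succ (n j : ℕ) :
    a j (n+1) = ∑ h ∈ V j n, aZ h n := by
  classical
  haveI : Fintype (PathSet (n+1) (j:ℤ)) := Fintype.ofFinite _
  rw [a_eq, aZ]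
  let f : PathSet (n+1) (j:ℤ) → V j n := fun p => ⟨p.1 (Fin.castSucc (Fin.last n)), mem_V_of n j p⟩
  have e1 : (Σ h : V j n, {p : PathSet (n+1) (j:ℤ) // f p = h}) ≃ PathSet (n+1) (j:ℤ) :=
    Equiv.sigmaFiberEquiv f
  rw [← Nat.card_congr e1]
  haveI : ∀ h : V j n, Fintype {p : PathSet (n+1) (j:ℤ) // f p = h} := fun h => Fintype.ofFinite _
  rw [Nat.card_eq_fintype_card, Fintype.card_sigma]
  rw [← Finset.sum_attach (V j n) (fun h => aZ h n)]
  apply Finset.sum_congr rfl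
  intro h _
  have e2 : {p : PathSet (n+1) (j:ℤ) // f p = h} ≃ PathSet n h.1 := by
    refine Equiv.trans ?_ (fiberEquiv n j h.1 h.2)
    apply Equiv.subtypeEquivRight
    intro p
    constructor
    · intro hp; exact congrArg Subtype.val hp
    · intro hp; exact Subtype.ext hp
  rw [← Nat.card_eq_fintype_card, Nat.card_congr e2, aZ]

noncomputable def Gc (j n : ℕ) : ℕ := ∑ h ∈ Finset.Ico (j+1) (n+1), a h n

lemma sum_Icc_int (j n : ℕ) :
    ∑ h ∈ Finset.Icc ((j:ℤ)+1) (n:ℤ), aZ h n = Gc j n := by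
  rw [Gc]
  have hmap : Finset.Icc ((j:ℤ)+1) (n:ℤ) =
      Finset.map ⟨(Nat.cast : ℕ → ℤ), fun x y hxy => by exact_mod_cast hxy⟩
        (Finset.Ico (j+1) (n+1)) := by
    ext x
    simp only [Finset.mem_Icc, Finset.mem_map, Finset.mem_Ico, Function.Embedding.coeFn_mk]
    constructor
    · rintro ⟨h1, h2⟩
      exact ⟨x.toNat, by omega, by change ((x.toNat:ℕ):ℤ) = x; omega⟩
    · rintro ⟨y, hy, rfl⟩
      change (j:ℤ)+1 ≤ (y:ℤ) ∧ (y:ℤ) ≤ n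
      omega
  rw [hmap, Finset.sum_map]
  apply Finset.sum_congr rfl
  intro x _
  rfl

lemma a_succ_zero (n : ℕ) : a 0 (n+1) = Gc 0 n := by
  rw [card_succ, V, if_pos rfl, Finset.empty_union]
  push_cast
  exact sum_Icc_int 0 n

lemma a_succ_succ (k n : ℕ) : a (k+1) (n+1) = a k n + Gc (k+1) n := by
  rw [card_succ, V, if_neg (Nat.succ_ne_zero k)]
  rw [Finset.sum_union]
  · congr 1
    · rw [Finset.sum_singleton]
      have : ((k+1:ℕ):ℤ) - 1 = (k:ℤ) := by push_cast; ring
      rw [this, ← a_eq]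
    · exact sum_Icc_int (k+1) n
  · rw [Finset.disjoint_left]
    intro x hx hx2
    simp only [Finset.mem_singleton] at hx
    simp only [Finset.mem_Icc] at hx2
    omega

lemma Gc_rec (j n : ℕ) : Gc j n = a (j+1) n + Gc (j+1) n := by
  rw [Gc, Gc]
  rcases lt_or_ge (j+1) (n+1) with hc | hc
  · rw [Finset.sum_eq_sum_Ico_succ_bot hc]
  · have h1 : Finset.Ico (j+1) (n+1) = ∅ := Finset.Ico_eq_empty (by omega)
    have h2 : Finset.Ico (j+2) (n+1) = ∅ := Finset.Ico_eq_empty (by omega)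
    rw [h1, h2, Finset.sum_empty]
    rw [a_eq_zero (show n < j+1 by omega)]
    rfl

lemma Gc_eq_zero {j n : ℕ} (h : n ≤ j) : Gc j n = 0 := by
  rw [Gc, Finset.Ico_eq_empty (by omega), Finset.sum_empty]

/-! ### Power series part -/

lemma hq_expand : q = 1 + X + X ^ 2 := rfl

lemma hwq : w * q = X := by
  have h1 : q * PowerSeries.invOfUnit q 1 = 1 :=
    PowerSeries.mul_invOfUnit q 1 (by simp [q])
  rw [w, mul_assoc, mul_comm (PowerSeries.invOfUnit q 1) q, h1, mul_one]

lemma coeff_w_pow_of_lt {N n : ℕ} (h : N < n) : coeff N (w ^ n) = 0 := by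
  rw [w, mul_pow, mul_comm, PowerSeries.coeff_mul_X_pow', if_neg (by omega)]

lemma coeff_series (b : ℕ → ℕ) (N : ℕ) :
    coeff N (series b) = ∑ n ∈ range (N + 1), (b n : ℤ) * coeff N (w ^ n) := by
  rw [series, coeff_mk]

lemma coeff_series_finsum (b : ℕ → ℕ) {N M : ℕ} (h : N < M) :
    coeff N (series b) = coeff N (∑ n ∈ range M, C (b n : ℤ) * w ^ n) := by
  rw [coeff_series, map_sum]
  simp_rw [PowerSeries.coeff_C_mul]
  apply Finset.sum_subset (Finset.range_subset_range.2 h)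
  intro x hx hnx
  simp only [Finset.mem_range] at hx hnx
  rw [coeff_w_pow_of_lt (by omega), mul_zero]

lemma series_congr {b c : ℕ → ℕ} (h : ∀ n, b n = c n) : series b = series c := by
  have : b = c := funext h
  rw [this]

lemma series_add (b c : ℕ → ℕ) :
    series (fun n => b n + c n) = series b + series c := by
  apply PowerSeries.ext
  intro N
  rw [map_add, coeff_series, coeff_series, coeff_series, ← Finset.sum_add_distrib]
  apply Finset.sum_congr rfl
  intro n _
  push_cast
  ring

lemma coeff_mul_congr_right (A Y Z : PowerSeries ℤ) (N : ℕ)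
    (h : ∀ k ≤ N, coeff k Y = coeff k Z) :
    coeff N (A * Y) = coeff N (A * Z) := by
  rw [PowerSeries.coeff_mul, PowerSeries.coeff_mul]
  apply Finset.sum_congr rfl
  rintro ⟨x, y⟩ hxy
  rw [Finset.HasAntidiagonal.mem_antidiagonal] at hxy
  rw [h y (by omega)]

lemma w_mul_series (b : ℕ → ℕ) :
    w * series b = series (fun m => match m with | 0 => 0 | k+1 => b k) := by
  apply PowerSeries.ext
  intro N
  rw [coeff_mul_congr_right w (series b) (∑ n ∈ range (N+1), C (b n : ℤ) * w ^ n) N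
    (fun k hk => coeff_series_finsum b (by omega))]
  rw [Finset.mul_sum]
  have hrw : ∀ n : ℕ, w * (C (b n : ℤ) * w ^ n) = C (b n : ℤ) * w ^ (n+1) := by
    intro n; ring
  simp_rw [hrw]
  rw [map_sum]
  simp_rw [PowerSeries.coeff_C_mul]
  rw [coeff_series]
  rw [Finset.sum_range_succ (fun n => (b n : ℤ) * coeff N (w ^ (n+1))) N]
  rw [coeff_w_pow_of_lt (Nat.lt_succ_self N), mul_zero, add_zero]
  rw [Finset.sum_range_succ'
    (fun n => (((match n with | 0 => 0 | k+1 => b k) : ℕ) : ℤ) * coeff N (w ^ n)) N]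
  simp

lemma series_eq_one_add (b c : ℕ → ℕ) (h0 : b 0 = c 0 + 1) (hs : ∀ n, b (n+1) = c (n+1)) :
    series b = 1 + series c := by
  apply PowerSeries.ext
  intro N
  rw [map_add, coeff_series, coeff_series, Finset.sum_range_succ' _ N,
    Finset.sum_range_succ' (fun n => (c n : ℤ) * coeff N (w ^ n)) N]
  simp_rw [hs]
  rw [h0, pow_zero]
  push_cast
  ring

/-! ### Series recurrences -/

lemma RecS0 : series (a 0) = 1 + w * series (Gc 0) := by
  rw [w_mul_series]
  apply series_eq_one_add
  · rw [a_zero_eq]; rfl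
  · intro n; exact a_succ_zero n

lemma RecSsucc (k : ℕ) :
    series (a (k+1)) = w * (series (a k) + series (Gc (k+1))) := by
  rw [← series_add, w_mul_series]
  apply series_congr
  intro n
  cases n with
  | zero => exact a_eq_zero (Nat.succ_pos k)
  | succ m => exact a_succ_succ k m

lemma RecG (j : ℕ) : series (Gc j) = series (a (j+1)) + series (Gc (j+1)) := by
  rw [← series_add]
  exact series_congr (fun n => Gc_rec j n)

noncomputable def DD (j : ℕ) : PowerSeries ℤ :=
  series (a j) * (1 + X) ^ (j+1) - q * X ^ j

noncomputable def HH (j : ℕ) : PowerSeries ℤ :=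
  series (Gc j) * (1 + X) ^ (j+1) - q * X ^ (j+1)

lemma DD0 : DD 0 = w * HH 0 := by
  rw [DD, HH, RecS0]
  linear_combination X * hwq - hq_expand

lemma DDsucc (k : ℕ) : DD (k+1) = w * ((1 + X) * DD k + HH (k+1)) := by
  rw [DD, DD, HH, RecSsucc k]
  linear_combination ((1 + X) * X ^ k + X ^ (k+2)) * hwq - X ^ (k+1) * hq_expand

lemma HHrec (j : ℕ) : HH j * (1 + X) = HH (j+1) + DD (j+1) := by
  rw [HH, HH, DD, RecG j]
  ring

lemma coeff_series_a_lt {N j : ℕ} (h : N < j) : coeff N (series (a j)) = 0 := by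
  rw [coeff_series]
  apply Finset.sum_eq_zero
  intro n hn
  rw [Finset.mem_range] at hn
  rw [a_eq_zero (by omega), Nat.cast_zero, zero_mul]

lemma coeff_series_G_le {N j : ℕ} (h : N ≤ j) : coeff N (series (Gc j)) = 0 := by
  rw [coeff_series]
  apply Finset.sum_eq_zero
  intro n hn
  rw [Finset.mem_range] at hn
  rw [Gc_eq_zero (by omega), Nat.cast_zero, zero_mul]

lemma coeff_mul_left_zero (Y Z : PowerSeries ℤ) (N : ℕ)
    (hZ : ∀ m ≤ N, coeff m Z = 0) : coeff N (Y * Z) = 0 := by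
  rw [PowerSeries.coeff_mul]
  apply Finset.sum_eq_zero
  rintro ⟨x, y⟩ hxy
  rw [Finset.HasAntidiagonal.mem_antidiagonal] at hxy
  rw [hZ y (by omega), mul_zero]

lemma coeff_mul_right_zero (Y Z : PowerSeries ℤ) (N : ℕ)
    (hY : ∀ m ≤ N, coeff m Y = 0) : coeff N (Y * Z) = 0 := by
  rw [PowerSeries.coeff_mul]
  apply Finset.sum_eq_zero
  rintro ⟨x, y⟩ hxy
  rw [Finset.HasAntidiagonal.mem_antidiagonal] at hxy
  rw [hY x (by omega), zero_mul]

lemma coeff_DD_lt {N j : ℕ} (h : N < j) : coeff N (DD j) = 0 := by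
  rw [DD, map_sub]
  rw [coeff_mul_right_zero _ _ _ (fun m hm => coeff_series_a_lt (by omega))]
  rw [mul_comm q, coeff_mul_right_zero _ _ _
    (fun m hm => by rw [PowerSeries.coeff_X_pow, if_neg (by omega)])]
  ring

lemma coeff_HH_le {N j : ℕ} (h : N ≤ j) : coeff N (HH j) = 0 := by
  rw [HH, map_sub]
  rw [coeff_mul_right_zero _ _ _ (fun m hm => coeff_series_G_le (by omega))]
  rw [mul_comm q, coeff_mul_right_zero _ _ _
    (fun m hm => by rw [PowerSeries.coeff_X_pow, if_neg (by omega)])]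
  ring

lemma coeff_w_mul_zero (Z : PowerSeries ℤ) (N : ℕ)
    (hZ : ∀ m, m < N → coeff m Z = 0) : coeff N (w * Z) = 0 := by
  rw [w, mul_assoc]
  cases N with
  | zero =>
      rw [PowerSeries.coeff_zero_eq_constantCoeff, map_mul, PowerSeries.constantCoeff_X,
        zero_mul]
  | succ M =>
      rw [PowerSeries.coeff_succ_X_mul]
      exact coeff_mul_left_zero _ _ _ (fun m hm => hZ m (by omega))

lemma key : ∀ N : ℕ, (∀ j, coeff N (DD j) = 0) ∧ (∀ j, coeff N (HH j) = 0) := by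
  intro N
  induction N using Nat.strong_induction_on with
  | _ N IH =>
    have hD : ∀ j, coeff N (DD j) = 0 := by
      intro j
      cases j with
      | zero =>
          rw [DD0]
          exact coeff_w_mul_zero _ _ (fun m hm => (IH m hm).2 0)
      | succ k =>
          rw [DDsucc]
          apply coeff_w_mul_zero
          intro m hm
          rw [map_add]
          rw [coeff_mul_left_zero _ _ _ (fun i hi => (IH i (by omega)).1 k)]
          rw [(IH m hm).2 (k+1), add_zero]
    refine ⟨hD, ?_⟩
    have hH : ∀ m j, N ≤ j + m → coeff N (HH j) = 0 := by
      intro m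
      induction m with
      | zero => intro j hj; exact coeff_HH_le (by omega)
      | succ m ihm =>
          intro j hj
          have h3 := congrArg (coeff N) (HHrec j)
          rw [map_add, hD (j+1), ihm (j+1) (by omega), add_zero, mul_add, mul_one,
            map_add] at h3
          cases N with
          | zero =>
              rw [PowerSeries.coeff_zero_eq_constantCoeff, map_mul,
                PowerSeries.constantCoeff_X, mul_zero,
                ← PowerSeries.coeff_zero_eq_constantCoeff, add_zero] at h3
              exact h3
          | succ P =>
              rw [PowerSeries.coeff_succ_mul_X, (IH P (by omega)).2 j, add_zero] at h3
              exact h3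
    intro j
    exact hH N j (by omega)

theorem stmt10 (j : ℕ) :
    (series fun n => pathCount n 0 j (fun x => 0 ≤ x)) * (1 + X) ^ (j + 1) =
      q * X ^ j := by
  have hDD : DD j = 0 := by
    apply PowerSeries.ext
    intro N
    rw [(key N).1 j, map_zero]
  have := sub_eq_zero.mp (by rw [← DD]; exact hDD)
  exact this
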